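/- arXiv:1005.0715 — 2 statements merged into one kernel-verified Lean document; each statement's English description precedes it below -/
import Mathlib

section
/- The alternating group A_5 does not satisfy the rewriting property P_7; that is, there exists a sequence of 7 elements x_1, x_2, ..., x_7 of A_5 such that for every non-identity permutation σ of {1,...,7} one has x_1 x_2 ⋯ x_7 ≠ x_{σ(1)} x_{σ(2)} ⋯ x_{σ(7)}. -/
open Equiv

private def p1 : Perm (Fin 5) := Equiv.mk ![0,1,3,4,2] ![0,1,4,2,3] (by decide) (by decide)
private def p2 : Perm (Fin 5) := Equiv.mk ![0,2,1,4,3] ![0,2,1,4,3] (by decide) (by decide)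
private def p3 : Perm (Fin 5) := Equiv.mk ![1,2,3,4,0] ![4,0,1,2,3] (by decide) (by decide)
private def p4 : Perm (Fin 5) := Equiv.mk ![0,4,1,3,2] ![0,2,4,3,1] (by decide) (by decide)
private def p5 : Perm (Fin 5) := Equiv.mk ![2,4,0,3,1] ![2,4,0,3,1] (by decide) (by decide)
private def p6 : Perm (Fin 5) := Equiv.mk ![3,0,2,1,4] ![1,3,2,0,4] (by decide) (by decide)
private def p7 : Perm (Fin 5) := Equiv.mk ![2,4,3,1,0] ![4,3,0,2,1] (by decide) (by decide)
private def y : Fin 7 → Perm (Fin 5) := ![p1,p2,p3,p4,p5,p6,p7]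

private theorem hy : ∀ i, y i ∈ alternatingGroup (Fin 5) := by
  intro i
  rw [Equiv.Perm.mem_alternatingGroup]
  fin_cases i <;> decide

private def inserts {α : Type*} (a : α) : List α → List (List α)
  | [] => [[a]]
  | b :: t => (a :: b :: t) :: (inserts a t).map (b :: ·)

private def permsList {α : Type*} : List α → List (List α)
  | [] => [[]]
  | a :: t => (permsList t).flatMap (inserts a)

private theorem mem_inserts {α : Type*} (a : α) (l1 l2 : List α) :
    l1 ++ a :: l2 ∈ inserts a (l1 ++ l2) := by
  induction l1 with
  | nil => cases l2 <;> simp [inserts]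
  | cons b t ih =>
    rcases t ++ l2 with _ | _ <;>
      · simp only [List.cons_append, inserts, List.mem_cons, List.mem_map]
        exact Or.inr ⟨t ++ a :: l2, ih, rfl⟩

private theorem mem_permsList {α : Type*} {l L : List α} (h : l.Perm L) : l ∈ permsList L := by
  induction L generalizing l with
  | nil => simp [List.Perm.eq_nil h, permsList]
  | cons a t ih =>
    have ha : a ∈ l := h.mem_iff.2 List.mem_cons_self
    obtain ⟨l1, l2, rfl⟩ := List.append_of_mem ha
    have h2 : (l1 ++ l2).Perm t := (List.perm_middle.symm.trans h).cons_inv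
    simp only [permsList, List.mem_flatMap]
    exact ⟨l1 ++ l2, ih h2, mem_inserts a l1 l2⟩

set_option maxHeartbeats 1000000 in
set_option maxRecDepth 100000 in
private theorem core0 : ∀ l ∈ permsList ((List.finRange 7).erase 0),
    (List.map y (0 :: l)).prod = (List.ofFn y).prod → (0 :: l : List (Fin 7)) = List.finRange 7 := by decide

set_option maxHeartbeats 1000000 in
set_option maxRecDepth 100000 in
private theorem core1 : ∀ l ∈ permsList ((List.finRange 7).erase 1),
    (List.map y (1 :: l)).prod = (List.ofFn y).prod → (1 :: l : List (Fin 7)) = List.finRange 7 := by decide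

set_option maxHeartbeats 1000000 in
set_option maxRecDepth 100000 in
private theorem core2 : ∀ l ∈ permsList ((List.finRange 7).erase 2),
    (List.map y (2 :: l)).prod = (List.ofFn y).prod → (2 :: l : List (Fin 7)) = List.finRange 7 := by decide

set_option maxHeartbeats 1000000 in
set_option maxRecDepth 100000 in
private theorem core3 : ∀ l ∈ permsList ((List.finRange 7).erase 3),
    (List.map y (3 :: l)).prod = (List.ofFn y).prod → (3 :: l : List (Fin 7)) = List.finRange 7 := by decide

set_option maxHeartbeats 1000000 in
set_option maxRecDepth 100000 in
private theorem core4 : ∀ l ∈ permsList ((List.finRange 7).erase 4),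
    (List.map y (4 :: l)).prod = (List.ofFn y).prod → (4 :: l : List (Fin 7)) = List.finRange 7 := by decide

set_option maxHeartbeats 1000000 in
set_option maxRecDepth 100000 in
private theorem core5 : ∀ l ∈ permsList ((List.finRange 7).erase 5),
    (List.map y (5 :: l)).prod = (List.ofFn y).prod → (5 :: l : List (Fin 7)) = List.finRange 7 := by decide

set_option maxHeartbeats 1000000 in
set_option maxRecDepth 100000 in
private theorem core6 : ∀ l ∈ permsList ((List.finRange 7).erase 6),
    (List.map y (6 :: l)).prod = (List.ofFn y).prod → (6 :: l : List (Fin 7)) = List.finRange 7 := by decide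

private theorem coreAll : ∀ l : List (Fin 7), l.Perm (List.finRange 7) →
    (l.map y).prod = (List.ofFn y).prod → l = List.finRange 7 := by
  rintro (_ | ⟨k, t⟩) hperm hprod
  · exact absurd hperm.length_eq (by decide)
  · have hk : k ∈ List.finRange 7 ∧ t.Perm ((List.finRange 7).erase k) :=
      (List.cons_perm_iff_perm_erase).1 hperm
    have ht := mem_permsList hk.2
    fin_cases k
    · exact core0 t ht hprod
    · exact core1 t ht hprod
    · exact core2 t ht hprod
    · exact core3 t ht hprod
    · exact core4 t ht hprod
    · exact core5 t ht hprod
    · exact core6 t ht hprod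

/-- `A₅` does not satisfy `P₇`: there is a non-rewritable word of length 7. -/
theorem A5_not_rewritable_seven :
    ∃ x : Fin 7 → alternatingGroup (Fin 5),
      ∀ σ : Equiv.Perm (Fin 7), σ ≠ 1 →
        (List.ofFn x).prod ≠ (List.ofFn (x ∘ σ)).prod := by
  refine ⟨fun i => ⟨y i, hy i⟩, ?_⟩
  intro σ hσ h
  apply hσ
  have hcoe : ∀ g : Fin 7 → alternatingGroup (Fin 5),
      (((List.ofFn g).prod : alternatingGroup (Fin 5)) : Perm (Fin 5))
        = (List.ofFn (fun i => (g i : Perm (Fin 5)))).prod := by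
    intro g
    have := map_list_prod ((alternatingGroup (Fin 5)).subtype) (List.ofFn g)
    rw [List.map_ofFn] at this
    exact this
  have h2 : (List.ofFn y).prod = (List.ofFn (y ∘ σ)).prod := by
    have := congrArg (fun g : alternatingGroup (Fin 5) => (g : Perm (Fin 5))) h
    simp only [hcoe] at this
    exact this
  have hnodup : (List.ofFn (⇑σ)).Nodup := (List.nodup_ofFn).2 σ.injective
  have hmem : ∀ a : Fin 7, a ∈ List.ofFn (⇑σ) := by
    intro a
    rw [List.mem_ofFn]
    exact ⟨σ.symm a, σ.apply_symm_apply a⟩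
  have hperm : (List.ofFn (⇑σ)).Perm (List.finRange 7) := by
    rw [List.perm_ext_iff_of_nodup hnodup (List.nodup_finRange 7)]
    exact fun a => ⟨fun _ => List.mem_finRange a, fun _ => hmem a⟩
  have hmap : ((List.ofFn (⇑σ)).map y) = List.ofFn (y ∘ σ) := List.map_ofFn
  have hl : List.ofFn (⇑σ) = List.finRange 7 :=
    coreAll _ hperm (by rw [hmap]; exact h2.symm)
  have hid : List.ofFn (⇑σ) = List.ofFn (id : Fin 7 → Fin 7) := by
    rw [hl, List.ofFn_id]
  have hfun : ⇑σ = id := List.ofFn_injective hid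
  exact Equiv.coe_fn_injective (hfun.trans Equiv.Perm.coe_one.symm)
end

section
/- The alternating group A_5 does not satisfy the rewriting property P_n for any integer n with 2 ≤ n ≤ 7; that is, for each such n there exists a sequence of n elements x_1, ..., x_n of A_5 such that for every non-identity permutation σ of {1,...,n} one has x_1 x_2 ⋯ x_n ≠ x_{σ(1)} x_{σ(2)} ⋯ x_{σ(n)}. -/
section Checker

variable {M : Type*} [Monoid M] [DecidableEq M]

/-- All ways to select one element from a list, with the remainder. -/
def selOne {α : Type*} : List α → List (α × List α)
  | [] => []
  | a :: l => (a, l) :: (selOne l).map fun p => (p.1, a :: p.2)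

/-- Check that every ordering of `L` (prefixed by `acc`), except the given one
when `isId = true`, has product different from `t`. -/
def chkAll (t : M) : ℕ → M → Bool → List M → Bool
  | _, acc, isId, [] => isId || decide (acc ≠ t)
  | k + 1, acc, isId, a :: l =>
      chkAll t k (acc * a) isId l &&
      (selOne l).all fun p => chkAll t k (acc * p.1) false (a :: p.2)
  | 0, _, _, _ :: _ => false

lemma mem_selOne {α : Type*} : ∀ {l : List α} {b : α}, b ∈ l →
    ∃ r, (b, r) ∈ selOne l ∧ (b :: r).Perm l := by
  intro l
  induction l with
  | nil => intro b hb; simp at hb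
  | cons a l ih =>
    intro b hb
    rcases List.mem_cons.1 hb with h | h
    · subst h; exact ⟨l, List.mem_cons_self, List.Perm.refl _⟩
    · obtain ⟨r, hr, hp⟩ := ih h
      refine ⟨a :: r, ?_, ?_⟩
      · exact List.mem_cons_of_mem _ (List.mem_map_of_mem hr)
      · exact (List.Perm.swap a b r).trans (hp.cons a)

lemma chkAll_sound (t : M) :
    ∀ (n : ℕ) (L : List M), L.length = n → ∀ (acc : M) (isId : Bool),
      chkAll t n acc isId L = true →
      ∀ l', l'.Perm L → (isId = true → l' ≠ L) → acc * l'.prod ≠ t := by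
  intro n
  induction n with
  | zero =>
    intro L hL acc isId h l' hp hne
    have hLnil : L = [] := List.length_eq_zero_iff.mp hL
    subst hLnil
    have hl' : l' = [] := hp.eq_nil
    subst hl'
    simp only [chkAll, Bool.or_eq_true, decide_eq_true_eq] at h
    rcases h with h | h
    · exact absurd rfl (hne h)
    · simpa using h
  | succ n ih =>
    intro L hL acc isId h l' hp hne
    obtain ⟨a, l, rfl⟩ : ∃ a l, L = a :: l := by
      cases L with
      | nil => simp at hL
      | cons a l => exact ⟨a, l, rfl⟩
    cases l' with
    | nil => simpa using hp.length_eq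
    | cons b l'' =>
      simp only [chkAll, Bool.and_eq_true, List.all_eq_true] at h
      obtain ⟨h1, h2⟩ := h
      by_cases hba : b = a
      · subst hba
        have hl'' : l''.Perm l := hp.cons_inv
        have := ih l (by simpa using hL) (acc * b) isId h1 l'' hl''
          (fun hid hEq => hne hid (by rw [hEq]))
        simpa [mul_assoc] using this
      · have hb : b ∈ l := by
          have hbmem : b ∈ a :: l := hp.subset List.mem_cons_self
          rcases List.mem_cons.1 hbmem with h | h
          · exact absurd h hba
          · exact h
        obtain ⟨r, hr, hbr⟩ := mem_selOne hb
        have hl'' : l''.Perm (a :: r) := by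
          have h1' : l''.Perm ((a :: l).erase b) :=
            (List.cons_perm_iff_perm_erase.mp hp).2
          have h2' : (a :: l).erase b = a :: l.erase b := by
            rw [List.erase_cons_tail]
            simpa using fun h : a = b => hba h.symm
          have h3' : (l.erase b).Perm r := by
            have := (hbr.symm.erase b)
            simpa using this
          exact (h1'.trans (h2' ▸ (h3'.cons a)))
        have hlen : (a :: r).length = n := by
          have := hbr.length_eq
          simp only [List.length_cons] at this hL ⊢
          omega
        have := ih (a :: r) hlen (acc * b) false (h2 (b, r) hr) l'' hl'' (by simp)
        simpa [mul_assoc] using this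

lemma not_rewritable_of_chkAll {G : Type*} [Group G] [DecidableEq G] {n : ℕ}
    {S : Subgroup G} (x : Fin n → S)
    (hinj : Function.Injective fun i => ((x i : G)))
    (hchk : chkAll (List.ofFn fun i => ((x i : G))).prod n 1 true
      (List.ofFn fun i => ((x i : G))) = true) :
    ∀ σ : Equiv.Perm (Fin n), σ ≠ 1 →
      (List.ofFn x).prod ≠ (List.ofFn (x ∘ σ)).prod := by
  intro σ hσ h
  set f : Fin n → G := fun i => ((x i : G)) with hf
  have h' := congrArg (S.subtype) h
  rw [map_list_prod, map_list_prod, List.map_ofFn, List.map_ofFn] at h'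
  have hcomp : (⇑S.subtype ∘ (x ∘ σ)) = f ∘ σ := rfl
  have hcomp2 : (⇑S.subtype ∘ x) = f := rfl
  rw [hcomp, hcomp2] at h'
  have hne : (true = true) → List.ofFn (f ∘ σ) ≠ List.ofFn f := by
    intro _ hEq
    apply hσ
    have hfe : f ∘ σ = f := List.ofFn_injective hEq
    exact Equiv.ext fun i => hinj (congrFun hfe i)
  have key := chkAll_sound (List.ofFn f).prod n (List.ofFn f) (by simp) 1 true hchk
    (List.ofFn (f ∘ σ)) (Equiv.Perm.ofFn_comp_perm σ f) hne
  rw [one_mul] at key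
  exact key h'.symm

end Checker

section Witnesses

abbrev P5 := Equiv.Perm (Fin 5)

def a2 : P5 := Equiv.swap 2 3 * Equiv.swap 3 4
def a3 : P5 := Equiv.swap 1 2 * Equiv.swap 3 4
def a4 : P5 := Equiv.swap 2 4 * Equiv.swap 4 3
def a5 : P5 := Equiv.swap 0 1 * Equiv.swap 3 4
def a6 : P5 := Equiv.swap 1 2 * Equiv.swap 2 4
def a7 : P5 := Equiv.swap 1 4 * Equiv.swap 4 2
def a8 : P5 := Equiv.swap 0 1 * Equiv.swap 2 3
def a9 : P5 := Equiv.swap 0 1 * Equiv.swap 1 2 * Equiv.swap 2 3 * Equiv.swap 3 4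
def a10 : P5 := Equiv.swap 0 2 * Equiv.swap 1 4
def a11 : P5 := Equiv.swap 0 3 * Equiv.swap 3 1
def a12 : P5 := Equiv.swap 0 2 * Equiv.swap 2 3 * Equiv.swap 3 1 * Equiv.swap 1 4

local notation "A5" => alternatingGroup (Fin 5)

theorem memA5 (g : P5) (h : Equiv.Perm.sign g = 1) : g ∈ alternatingGroup (Fin 5) :=
  Equiv.Perm.mem_alternatingGroup.mpr h

def w2 : Fin 2 → A5 := ![⟨a2, memA5 _ (by decide)⟩, ⟨a3, memA5 _ (by decide)⟩]
def w3 : Fin 3 → A5 := ![⟨a2, memA5 _ (by decide)⟩, ⟨a3, memA5 _ (by decide)⟩,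
  ⟨a4, memA5 _ (by decide)⟩]
def w4 : Fin 4 → A5 := ![⟨a2, memA5 _ (by decide)⟩, ⟨a3, memA5 _ (by decide)⟩,
  ⟨a4, memA5 _ (by decide)⟩, ⟨a5, memA5 _ (by decide)⟩]
def w5 : Fin 5 → A5 := ![⟨a2, memA5 _ (by decide)⟩, ⟨a3, memA5 _ (by decide)⟩,
  ⟨a4, memA5 _ (by decide)⟩, ⟨a5, memA5 _ (by decide)⟩, ⟨a6, memA5 _ (by decide)⟩]
def w6 : Fin 6 → A5 := ![⟨a2, memA5 _ (by decide)⟩, ⟨a3, memA5 _ (by decide)⟩,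
  ⟨a4, memA5 _ (by decide)⟩, ⟨a5, memA5 _ (by decide)⟩, ⟨a7, memA5 _ (by decide)⟩,
  ⟨a8, memA5 _ (by decide)⟩]
def w7 : Fin 7 → A5 := ![⟨a2, memA5 _ (by decide)⟩, ⟨a3, memA5 _ (by decide)⟩,
  ⟨a9, memA5 _ (by decide)⟩, ⟨a7, memA5 _ (by decide)⟩, ⟨a10, memA5 _ (by decide)⟩,
  ⟨a11, memA5 _ (by decide)⟩, ⟨a12, memA5 _ (by decide)⟩]

end Witnesses

set_option maxRecDepth 40000 in
set_option maxHeartbeats 4000000 in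
/-- For every `n` with `2 ≤ n ≤ 7`, `A₅` has a non-rewritable word of length `n`,
so `A₅` does not satisfy `Pₙ`. -/
theorem A5_not_rewritable_of_le_seven :
    ∀ n : ℕ, 2 ≤ n → n ≤ 7 →
      ∃ x : Fin n → alternatingGroup (Fin 5),
        ∀ σ : Equiv.Perm (Fin n), σ ≠ 1 →
          (List.ofFn x).prod ≠ (List.ofFn (x ∘ σ)).prod := by
  intro n h2 h7
  interval_cases n
  · exact ⟨w2, not_rewritable_of_chkAll w2 (by decide) (by decide)⟩
  · exact ⟨w3, not_rewritable_of_chkAll w3 (by decide) (by decide)⟩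
  · exact ⟨w4, not_rewritable_of_chkAll w4 (by decide) (by decide)⟩
  · exact ⟨w5, not_rewritable_of_chkAll w5 (by decide) (by decide)⟩
  · exact ⟨w6, not_rewritable_of_chkAll w6 (by decide) (by decide)⟩
  · exact ⟨w7, not_rewritable_of_chkAll w7 (by decide) (by decide)⟩
end
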